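/- Let K be a field and let the degenerate affine Hecke algebra H_n act faithfully on P_n = K[t_1,...,t_n] via x_k·g = t_k g and s_r·g = −(s̃_r(g)−g)/(t_{r+1}−t_r) + s̃_r(g). Then the elements { x_1^{a_1}···x_n^{a_n} w : w ∈ S_n, a_1,...,a_n ∈ ℕ } are K-linearly independent in the algebra of K-linear operators on P_n generated by these operators. -/

import Mathlib

open MvPolynomial

namespace Stmt14

/-- The permutation of `Fin n` attached to a word in the letters `0,…,n−2`, each letter `a`
standing for the adjacent transposition `(a, a+1)`. -/
def permFin (n : ℕ) (l : List ℕ) : Equiv.Perm (Fin n) :=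
  (l.map fun a => if h : a + 1 < n then
      Equiv.swap (⟨a, Nat.lt_of_succ_lt h⟩ : Fin n) ⟨a + 1, h⟩ else 1).prod

section Aux

variable {K : Type*} [Field K] {n : ℕ}

/-- Total degree of a monomial exponent. -/
def degm {n : ℕ} (m : Fin n →₀ ℕ) : ℕ := m.sum fun _ e => e

lemma degm_add (x y : Fin n →₀ ℕ) : degm (x + y) = degm x + degm y :=
  Finsupp.sum_add_index' (fun _ => rfl) (fun _ _ _ => rfl)

lemma degm_single (j : Fin n) (e : ℕ) : degm (Finsupp.single j e) = e :=
  Finsupp.sum_single_index rfl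

lemma degm_le_totalDegree {p : MvPolynomial (Fin n) K} {m : Fin n →₀ ℕ}
    (h : m ∈ p.support) : degm m ≤ p.totalDegree :=
  MvPolynomial.le_totalDegree h

/-- The submodule of polynomials all of whose monomials have total degree `< d`. -/
def Rlt (K : Type*) [Field K] (n d : ℕ) : Submodule K (MvPolynomial (Fin n) K) where
  carrier := {p | ∀ m ∈ p.support, degm m < d}
  add_mem' {p q} hp hq := by
    classical
    intro m hm
    rcases Finset.mem_union.mp (MvPolynomial.support_add hm) with h | h
    · exact hp m h
    · exact hq m h
  zero_mem' := by simp
  smul_mem' c p hp := fun m hm => hp m (MvPolynomial.support_smul hm)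

lemma mem_Rlt_iff {p : MvPolynomial (Fin n) K} {d : ℕ} :
    p ∈ Rlt K n d ↔ ∀ m ∈ p.support, degm m < d := Iff.rfl

lemma mem_Rlt_of_totalDegree_lt {p : MvPolynomial (Fin n) K} {d : ℕ}
    (h : p.totalDegree < d) : p ∈ Rlt K n d :=
  fun m hm => lt_of_le_of_lt (degm_le_totalDegree hm) h

lemma totalDegree_lt_of_mem_Rlt {p : MvPolynomial (Fin n) K} {d : ℕ}
    (hp : p ∈ Rlt K n d) (h0 : p ≠ 0) : p.totalDegree < d := by
  rcases Nat.eq_zero_or_pos d with rfl | hd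
  · exact absurd (MvPolynomial.support_eq_empty.mp
      (Finset.eq_empty_of_forall_notMem fun m hm => Nat.not_lt_zero _ (hp m hm))) h0
  · exact (Finset.sup_lt_iff hd).mpr hp

lemma coeff_eq_zero_of_mem_Rlt {p : MvPolynomial (Fin n) K} {d : ℕ}
    (hp : p ∈ Rlt K n d) {m : Fin n →₀ ℕ} (hm : d ≤ degm m) :
    MvPolynomial.coeff m p = 0 := by
  by_contra h
  exact absurd (hp m (MvPolynomial.mem_support_iff.mpr h)) (not_lt.mpr hm)

/-- Multiplication by `X j - X i` (with `i ≠ j`) raises the total degree by at least one. -/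
lemma totalDegree_succ_le_mul {i j : Fin n} (hij : i ≠ j)
    {E : MvPolynomial (Fin n) K} (hE : E ≠ 0) :
    E.totalDegree + 1 ≤ ((X j - X i) * E).totalDegree := by
  classical
  set e := E.totalDegree with he
  have hsupp : E.support.Nonempty := Finset.nonempty_iff_ne_empty.mpr (fun h => hE (MvPolynomial.support_eq_empty.mp h))
  set T := E.support.filter (fun m => degm m = e) with hTdef
  have hTne : T.Nonempty := by
    obtain ⟨m, hm, hms⟩ := Finset.exists_mem_eq_sup E.support hsupp
      (fun m : Fin n →₀ ℕ => m.sum fun _ e => e)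
    exact ⟨m, Finset.mem_filter.mpr ⟨hm, hms.symm⟩⟩
  obtain ⟨m, hmT, hmmax⟩ := Finset.exists_max_image T (fun m => m j) hTne
  have hmE : m ∈ E.support := (Finset.mem_filter.mp hmT).1
  have hmdeg : degm m = e := (Finset.mem_filter.mp hmT).2
  -- the coefficient of `m + single j 1` in the product is `coeff m E ≠ 0`
  have hcoeff : MvPolynomial.coeff (m + Finsupp.single j 1) ((X j - X i) * E)
      = MvPolynomial.coeff m E := by
    rw [sub_mul, MvPolynomial.coeff_sub, add_comm m (Finsupp.single j 1),
      MvPolynomial.coeff_X_mul, MvPolynomial.coeff_X_mul']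
    split_ifs with hmem
    · have hile : Finsupp.single i 1 ≤ m := by
        rw [Finsupp.single_le_iff]
        have := Finsupp.mem_support_iff.mp hmem
        rw [Finsupp.add_apply, Finsupp.single_apply, if_neg (Ne.symm hij)] at this
        omega
      have hrw : Finsupp.single j 1 + m - Finsupp.single i 1
          = Finsupp.single j 1 + (m - Finsupp.single i 1) :=
        add_tsub_assoc_of_le hile _
      have hzero : MvPolynomial.coeff (Finsupp.single j 1 + m - Finsupp.single i 1) E = 0 := by
        by_contra hne
        have hmem' : Finsupp.single j 1 + m - Finsupp.single i 1 ∈ E.support :=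
          MvPolynomial.mem_support_iff.mpr hne
        have hdeg' : degm (Finsupp.single j 1 + m - Finsupp.single i 1) = e := by
          have hc : (m - Finsupp.single i 1) + Finsupp.single i 1 = m :=
            tsub_add_cancel_of_le hile
          have hdm : degm (m - Finsupp.single i 1) + 1 = degm m := by
            have := congrArg degm hc
            rwa [degm_add, degm_single] at this
          rw [hrw, degm_add, degm_single]
          omega
        have hmemT : Finsupp.single j 1 + m - Finsupp.single i 1 ∈ T :=
          Finset.mem_filter.mpr ⟨hmem', hdeg'⟩
        have hj : ((Finsupp.single j 1 + m - Finsupp.single i 1 : Fin n →₀ ℕ)) j = m j + 1 := by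
          rw [hrw, Finsupp.add_apply, Finsupp.single_eq_same, Finsupp.tsub_apply,
            Finsupp.single_apply, if_neg hij]
          omega
        have := hmmax _ hmemT
        omega
        -- contradiction: (m'') j = m j + 1 > m j
      rw [hzero, sub_zero]
    · rw [sub_zero]
  have hne : MvPolynomial.coeff (m + Finsupp.single j 1) ((X j - X i) * E) ≠ 0 := by
    rw [hcoeff]
    exact MvPolynomial.mem_support_iff.mp hmE
  have hle := degm_le_totalDegree (p := (X j - X i) * E)
    (MvPolynomial.mem_support_iff.mpr hne)
  rw [degm_add, degm_single, hmdeg] at hle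
  exact hle

variable (S : ℕ → Module.End K (MvPolynomial (Fin n) K))
variable (hS : ∀ a : ℕ, ∀ h : a + 1 < n, ∀ g : MvPolynomial (Fin n) K,
      (X ⟨a + 1, h⟩ - X ⟨a, Nat.lt_of_succ_lt h⟩) * S a g =
        -(rename (Equiv.swap (⟨a, Nat.lt_of_succ_lt h⟩ : Fin n) ⟨a + 1, h⟩) g - g) +
          rename (Equiv.swap (⟨a, Nat.lt_of_succ_lt h⟩ : Fin n) ⟨a + 1, h⟩) g *
            (X ⟨a + 1, h⟩ - X ⟨a, Nat.lt_of_succ_lt h⟩))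

include hS

/-- The single-operator error term `S a g - s̃_a g` has all monomials of degree `< d` whenever
`g` has total degree at most `d`. -/
lemma err_mem (a : ℕ) (h : a + 1 < n) {g : MvPolynomial (Fin n) K} {d : ℕ}
    (hg : g.totalDegree ≤ d) :
    S a g - rename (Equiv.swap (⟨a, Nat.lt_of_succ_lt h⟩ : Fin n) ⟨a + 1, h⟩) g
      ∈ Rlt K n d := by
  set i : Fin n := ⟨a, Nat.lt_of_succ_lt h⟩ with hi
  set j : Fin n := ⟨a + 1, h⟩ with hj
  have hij : i ≠ j := by
    intro hEq
    have : (i : ℕ) = j := congrArg Fin.val hEq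
    simp [hi, hj] at this
  set σg := rename (Equiv.swap i j) g with hσg
  set E := S a g - σg with hE
  have key : (X j - X i) * E = g - σg := by
    have h1 := hS a h g
    rw [hE, mul_sub, h1]
    ring
  by_cases h0 : E = 0
  · rw [h0]; exact zero_mem _
  · apply mem_Rlt_of_totalDegree_lt
    have h1 : E.totalDegree + 1 ≤ ((X j - X i) * E).totalDegree :=
      totalDegree_succ_le_mul hij h0
    have h2 : (g - σg).totalDegree ≤ d := by
      refine le_trans (MvPolynomial.totalDegree_sub g σg) ?_
      exact max_le hg (le_trans (MvPolynomial.totalDegree_rename_le _ _) hg)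
    rw [key] at h1
    omega

/-- `S a` preserves the filtration. -/
lemma S_mem_Rlt (a : ℕ) (h : a + 1 < n) {p : MvPolynomial (Fin n) K} {d : ℕ}
    (hp : p ∈ Rlt K n d) : S a p ∈ Rlt K n d := by
  by_cases h0 : p = 0
  · rw [h0, map_zero]; exact zero_mem _
  · have hlt := totalDegree_lt_of_mem_Rlt hp h0
    have herr := err_mem S hS a h (g := p) (d := d) hlt.le
    have hren : rename (Equiv.swap (⟨a, Nat.lt_of_succ_lt h⟩ : Fin n) ⟨a + 1, h⟩) p
        ∈ Rlt K n d :=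
      mem_Rlt_of_totalDegree_lt
        (lt_of_le_of_lt (MvPolynomial.totalDegree_rename_le _ _) hlt)
    have := Submodule.add_mem _ hren herr
    rwa [add_sub_cancel] at this

/-- The error term for a product of the `S a`'s along a word. -/
lemma prod_err_mem : ∀ (l : List ℕ), (∀ a ∈ l, a + 1 < n) →
    ∀ (g : MvPolynomial (Fin n) K) (d : ℕ), g.totalDegree ≤ d →
    ((l.map S).prod) g - rename (permFin n l) g ∈ Rlt K n d := by
  intro l
  induction l with
  | nil =>
    intro _ g d _
    have h1 : ((List.nil.map S).prod) g = g := by simp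
    have h2 : rename (⇑(permFin n [])) g = g := by
      have : permFin n [] = 1 := by simp [permFin]
      rw [this, Equiv.Perm.coe_one, MvPolynomial.rename_id, AlgHom.id_apply]
    rw [h1, h2, sub_self]
    exact zero_mem _
  | cons a l ih =>
    intro hl g d hg
    have ha : a + 1 < n := hl a (List.mem_cons_self)
    have hl' : ∀ b ∈ l, b + 1 < n := fun b hb => hl b (List.mem_cons_of_mem _ hb)
    set σ' : Equiv.Perm (Fin n) :=
      Equiv.swap (⟨a, Nat.lt_of_succ_lt ha⟩ : Fin n) ⟨a + 1, ha⟩ with hσ'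
    have hperm : permFin n (a :: l) = σ' * permFin n l := by
      simp [permFin, ha, hσ']
    have hprod : (((a :: l).map S).prod) g = S a (((l.map S).prod) g) := by
      rw [List.map_cons, List.prod_cons]
      rfl
    set P := ((l.map S).prod) g with hP
    set w := permFin n l with hw
    have h1 : P - rename (⇑w) g ∈ Rlt K n d := ih hl' g d hg
    have h2 : S a (P - rename (⇑w) g) ∈ Rlt K n d := S_mem_Rlt S hS a ha h1
    have h3 : S a (rename (⇑w) g) - rename (⇑σ') (rename (⇑w) g) ∈ Rlt K n d :=
      err_mem S hS a ha (le_trans (MvPolynomial.totalDegree_rename_le _ _) hg)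
    have hcomp : rename (⇑σ') (rename (⇑w) g) = rename (⇑(σ' * w)) g := by
      rw [rename_rename]
      rfl
    have hrw : S a P - rename (⇑(σ' * w)) g
        = S a (P - rename (⇑w) g) + (S a (rename (⇑w) g) - rename (⇑σ') (rename (⇑w) g)) := by
      rw [map_sub, hcomp]
      abel
    rw [hperm, hprod, hrw]
    exact Submodule.add_mem _ h2 h3

omit hS

lemma prodXpow (a : Fin n → ℕ) :
    (∏ k, (X k : MvPolynomial (Fin n) K) ^ a k)
      = monomial (Finsupp.equivFunOnFinite.symm a) (1 : K) := by
  have h1 : ∀ k : Fin n, (Finsupp.equivFunOnFinite.symm a) k = a k :=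
    fun k => Finsupp.equivFunOnFinite_symm_apply_apply _ _
  have h2 : (∏ k, (X k : MvPolynomial (Fin n) K) ^ a k)
      = ∏ k, (X k : MvPolynomial (Fin n) K) ^ (Finsupp.equivFunOnFinite.symm a) k :=
    Finset.prod_congr rfl fun k _ => by rw [h1]
  rw [h2, ← MvPolynomial.prod_X_pow_eq_monomial]
  exact (Finset.prod_subset (Finset.subset_univ _)
    (fun k _ hk => by rw [Finsupp.notMem_support_iff.mp hk, pow_zero])).symm

lemma degm_equivFun (a : Fin n → ℕ) :
    degm (Finsupp.equivFunOnFinite.symm a) = ∑ k, a k := by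
  rw [degm, Finsupp.sum_fintype _ _ (fun _ => rfl)]
  exact Finset.sum_congr rfl fun k _ => Finsupp.equivFunOnFinite_symm_apply_apply _ _

lemma degm_mapDomain (w : Equiv.Perm (Fin n)) (b : Fin n →₀ ℕ) :
    degm (b.mapDomain ⇑w) = degm b :=
  Finsupp.sum_mapDomain_index (fun _ => rfl) (fun _ _ _ => rfl)

lemma mapDomain_perm_apply (w : Equiv.Perm (Fin n)) (b : Fin n →₀ ℕ) (k : Fin n) :
    (b.mapDomain ⇑w) k = b (w⁻¹ k) := by
  conv_lhs => rw [← Equiv.apply_symm_apply w k]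
  exact Finsupp.mapDomain_apply w.injective b _

lemma nat_sep {A x y r r' : ℕ} (hr : r ≤ A) (hr' : r' ≤ A)
    (h : r + (A + 1) * x = r' + (A + 1) * y) : r = r' ∧ x = y := by
  have h1 : r % (A + 1) = r' % (A + 1) := by
    have := congrArg (· % (A + 1)) h
    simpa [Nat.add_mul_mod_self_left] using this
  rw [Nat.mod_eq_of_lt (by omega), Nat.mod_eq_of_lt (by omega)] at h1
  constructor
  · exact h1
  · have h2 : (A + 1) * x = (A + 1) * y := by omega
    exact Nat.eq_of_mul_eq_mul_left (by omega) h2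

end Aux

/-- Linear independence (PBW property) of the elements `x_1^{a_1}⋯x_n^{a_n} w` of the degenerate
affine Hecke algebra, realized as operators on `P_n = K[t_1,…,t_n]` via the faithful polynomial
representation `x_k·g = t_k g`, `s_r·g = −(s̃_r(g)−g)/(t_{r+1}−t_r) + s̃_r(g)` (each `S a` is
characterized by its defining identity after clearing the denominator), where the operator of
`w ∈ S_n` is the product of the `S a` along a reduced word for `w`. -/
theorem stmt14 (K : Type*) [Field K] (n : ℕ)
    (S : ℕ → Module.End K (MvPolynomial (Fin n) K))
    (hS : ∀ a : ℕ, ∀ h : a + 1 < n, ∀ g : MvPolynomial (Fin n) K,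
      (X ⟨a + 1, h⟩ - X ⟨a, Nat.lt_of_succ_lt h⟩) * S a g =
        -(rename (Equiv.swap (⟨a, Nat.lt_of_succ_lt h⟩ : Fin n) ⟨a + 1, h⟩) g - g) +
          rename (Equiv.swap (⟨a, Nat.lt_of_succ_lt h⟩ : Fin n) ⟨a + 1, h⟩) g *
            (X ⟨a + 1, h⟩ - X ⟨a, Nat.lt_of_succ_lt h⟩))
    (W : Equiv.Perm (Fin n) → Module.End K (MvPolynomial (Fin n) K))
    (hW : ∀ w : Equiv.Perm (Fin n), ∃ l : List ℕ,
      (∀ a ∈ l, a + 1 < n) ∧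
      (∀ l' : List ℕ, (∀ a ∈ l', a + 1 < n) → permFin n l' = permFin n l →
        l.length ≤ l'.length) ∧
      permFin n l = w ∧ W w = (l.map S).prod) :
    LinearIndependent K
      (fun p : Equiv.Perm (Fin n) × (Fin n → ℕ) =>
        (LinearMap.mulLeft K (∏ k, (X k : MvPolynomial (Fin n) K) ^ p.2 k)) ∘ₗ W p.1) := by
  classical
  rw [linearIndependent_iff']
  intro s c hsum p0 hp0
  by_contra hc0
  set T := s.filter (fun p => c p ≠ 0) with hT
  have hTne : T.Nonempty := ⟨p0, Finset.mem_filter.mpr ⟨hp0, hc0⟩⟩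
  obtain ⟨p1, hp1T, hp1A⟩ := Finset.exists_mem_eq_sup T hTne
    (fun p : Equiv.Perm (Fin n) × (Fin n → ℕ) => ∑ k, p.2 k)
  set A := T.sup (fun p : Equiv.Perm (Fin n) × (Fin n → ℕ) => ∑ k, p.2 k) with hA
  have hp1s : p1 ∈ s := (Finset.mem_filter.mp hp1T).1
  have hcp1 : c p1 ≠ 0 := (Finset.mem_filter.mp hp1T).2
  set b : Fin n →₀ ℕ :=
    Finsupp.equivFunOnFinite.symm (fun k : Fin n => (A + 1) * ((k : ℕ) + 1)) with hb
  set g : MvPolynomial (Fin n) K := monomial b 1 with hg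
  set m0 : Fin n →₀ ℕ :=
    Finsupp.equivFunOnFinite.symm p1.2 + b.mapDomain ⇑p1.1 with hm0
  have hdegg : g.totalDegree ≤ degm b := by
    rw [hg, MvPolynomial.totalDegree_monomial _ (one_ne_zero)]
    exact le_refl _
  have hdegm0 : degm m0 = A + degm b := by
    rw [hm0, degm_add, degm_mapDomain, degm_equivFun, ← hp1A]
  -- the key per-term computation
  have key : ∀ p ∈ s,
      c p * MvPolynomial.coeff m0 ((∏ k, (X k : MvPolynomial (Fin n) K) ^ p.2 k) * (W p.1 g))
        = c p * (if p = p1 then 1 else 0) := by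
    intro p hp
    by_cases hcp : c p = 0
    · rw [hcp, zero_mul, zero_mul]
    · have hpT : p ∈ T := Finset.mem_filter.mpr ⟨hp, hcp⟩
      have hfA : (∑ k, p.2 k) ≤ A :=
        Finset.le_sup (f := fun p : Equiv.Perm (Fin n) × (Fin n → ℕ) => ∑ k, p.2 k) hpT
      congr 1
      obtain ⟨l, hl1, -, hperm, hWl⟩ := hW p.1
      have hE : W p.1 g - rename (⇑p.1) g ∈ Rlt K n (degm b) := by
        rw [hWl, ← hperm]
        exact prod_err_mem S hS l hl1 g (degm b) hdegg
      set aF : Fin n →₀ ℕ := Finsupp.equivFunOnFinite.symm p.2 with haF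
      have hsplit : W p.1 g = rename (⇑p.1) g + (W p.1 g - rename (⇑p.1) g) := by
        abel
      rw [prodXpow, hsplit, mul_add, MvPolynomial.coeff_add]
      have h2 : MvPolynomial.coeff m0
          (monomial aF (1 : K) * (W p.1 g - rename (⇑p.1) g)) = 0 := by
        rw [MvPolynomial.coeff_monomial_mul']
        split_ifs with hle
        · have hsub : degm (m0 - aF) + degm aF = degm m0 := by
            rw [← degm_add, tsub_add_cancel_of_le hle]
          have hdegaF : degm aF = ∑ k, p.2 k := degm_equivFun _
          have hge : degm b ≤ degm (m0 - aF) := by omega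
          rw [coeff_eq_zero_of_mem_Rlt hE hge, mul_zero]
        · rfl
      rw [h2, add_zero, hg, rename_monomial, MvPolynomial.monomial_mul,
        MvPolynomial.coeff_monomial, mul_one]
      -- now reduce the condition to `p = p1`
      have hcond : (aF + b.mapDomain ⇑p.1 = m0) ↔ p = p1 := by
        constructor
        · intro heq
          have hpt : ∀ k : Fin n, p.2 k = p1.2 k ∧ (⇑p.1⁻¹ k : Fin n) = ⇑p1.1⁻¹ k := by
            intro k
            have hk := DFunLike.congr_fun heq k
            rw [Finsupp.add_apply, hm0, Finsupp.add_apply, mapDomain_perm_apply,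
              mapDomain_perm_apply] at hk
            rw [haF, Finsupp.equivFunOnFinite_symm_apply_apply,
              Finsupp.equivFunOnFinite_symm_apply_apply, hb,
              Finsupp.equivFunOnFinite_symm_apply_apply,
              Finsupp.equivFunOnFinite_symm_apply_apply] at hk
            have hbound : p.2 k ≤ A :=
              le_trans (Finset.single_le_sum (f := fun k => p.2 k)
                (fun _ _ => Nat.zero_le _) (Finset.mem_univ k)) hfA
            have hbound1 : p1.2 k ≤ A :=
              le_trans (Finset.single_le_sum (f := fun k => p1.2 k)
                (fun _ _ => Nat.zero_le _) (Finset.mem_univ k))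
                (le_of_eq hp1A.symm)
            obtain ⟨hr, hx⟩ := nat_sep hbound hbound1 hk
            refine ⟨hr, Fin.ext ?_⟩
            omega
          have hw : p.1 = p1.1 := by
            have : p.1⁻¹ = p1.1⁻¹ := Equiv.ext fun k => (hpt k).2
            exact inv_injective this
          have ha2 : p.2 = p1.2 := funext fun k => (hpt k).1
          exact Prod.ext hw ha2
        · intro heq
          rw [haF, heq, hm0]
      by_cases hpe : p = p1
      · rw [if_pos (hcond.mpr hpe), if_pos hpe]
      · rw [if_neg (fun h => hpe (hcond.mp h)), if_neg hpe]
  -- apply the sum hypothesis to `g` and extract the coefficient at `m0`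
  have hsum' := congrArg (fun F : Module.End K (MvPolynomial (Fin n) K) =>
    MvPolynomial.coeff m0 (F g)) hsum
  simp only [LinearMap.sum_apply, Finset.sum_apply, LinearMap.smul_apply,
    LinearMap.comp_apply, LinearMap.mulLeft_apply, LinearMap.zero_apply,
    MvPolynomial.coeff_sum, MvPolynomial.coeff_smul, smul_eq_mul,
    MvPolynomial.coeff_zero] at hsum'
  rw [Finset.sum_congr rfl key] at hsum'
  have : (∑ p ∈ s, c p * (if p = p1 then (1 : K) else 0)) = c p1 := by
    rw [Finset.sum_congr rfl (fun p _ => by rw [mul_ite, mul_one, mul_zero]),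
      Finset.sum_ite_eq' s p1 c, if_pos hp1s]
  rw [this] at hsum'
  exact hcp1 hsum'

end Stmt14
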